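/- For $1 \le p < q < \infty$, there exist a Banach space $E$ and a continuous bilinear operator $A : E \times E \to E$ such that $(A(x_j, y_j))_j \in \ell_p(E)$ whenever $(x_j) \in \ell_p^w(E)$ and $(y_j) \in \ell_q^w(E)$, but the transpose $A^t(x,y) := A(y,x)$ does not have this property. -/

import Mathlib

open Filter Topology

noncomputable def lpwNorm {E : Type*} [NormedAddCommGroup E] [NormedSpace ℝ E]
    (p : ℝ) (x : ℕ → E) : ℝ :=
  ⨆ f : {f : E →L[ℝ] ℝ // ‖f‖ ≤ 1}, (∑' j, |f.1 (x j)| ^ p) ^ (1 / p)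

def MemLpw {E : Type*} [NormedAddCommGroup E] [NormedSpace ℝ E]
    (p : ℝ) (x : ℕ → E) : Prop :=
  ∀ f : E →L[ℝ] ℝ, Summable fun j => |f (x j)| ^ p

variable {E F : Type*} [NormedAddCommGroup E] [NormedSpace ℝ E] [CompleteSpace E]
  [NormedAddCommGroup F] [NormedSpace ℝ F] [CompleteSpace F]

structure SummingCounterexample (p q : ℝ) where
  E : Type
  [grp : NormedAddCommGroup E]
  [sp : NormedSpace ℝ E]
  [cs : CompleteSpace E]
  A : E →L[ℝ] E →L[ℝ] E
  summing : ∀ x y : ℕ → E, MemLpw p x → MemLpw q y →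
    Summable fun j => ‖A (x j) (y j)‖ ^ p
  not_transpose : ¬ ∀ x y : ℕ → E, MemLpw p x → MemLpw q y →
    Summable fun j => ‖A (y j) (x j)‖ ^ p

section SCaux

open ENNReal

abbrev SCEb : Type := ↥(lp (fun _ : ℕ => ℝ) ∞)

noncomputable def SCphi : SCEb →L[ℝ] ℝ :=
  LinearMap.mkContinuous
    { toFun := fun x => x 0
      map_add' := fun x y => by simp [lp.coeFn_add]
      map_smul' := fun c x => by simp [lp.coeFn_smul] }
    1 (fun x => by
      rw [one_mul]
      exact lp.norm_apply_le_norm (E := fun _ : ℕ => ℝ) ENNReal.top_ne_zero x 0)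

@[simp] lemma SCphi_apply (x : SCEb) : SCphi x = x 0 := rfl

/-- The `j`-th standard basis vector of `ℓ^∞`. -/
noncomputable def SCe (j : ℕ) : SCEb := lp.single ∞ j (1 : ℝ)

lemma SCe_apply_self (j : ℕ) : (SCe j : ∀ _ : ℕ, ℝ) j = 1 :=
  lp.single_apply_self _ _ _

lemma SCe_apply_ne {i j : ℕ} (h : i ≠ j) : (SCe j : ∀ _ : ℕ, ℝ) i = 0 :=
  lp.single_apply_ne _ _ _ h

lemma SC_sign_mul (x : ℝ) : Real.sign x * x = |x| := by
  rcases lt_trichotomy x 0 with h | h | h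
  · rw [Real.sign_of_neg h, abs_of_neg h]; ring
  · simp [h]
  · rw [Real.sign_of_pos h, abs_of_pos h]; ring

lemma SC_abs_sign_le (x : ℝ) : |Real.sign x| ≤ 1 := by
  rcases Real.sign_apply_eq x with h | h | h <;> rw [h] <;> norm_num

lemma SCe_norm (j : ℕ) : ‖SCe j‖ = 1 := by
  refine le_antisymm (lp.norm_le_of_forall_le zero_le_one fun i => ?_) ?_
  · rcases eq_or_ne i j with rfl | h
    · rw [SCe_apply_self]; simp
    · rw [SCe_apply_ne h]; simp
  · have h := lp.norm_apply_le_norm (E := fun _ : ℕ => ℝ) ENNReal.top_ne_zero (SCe j) j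
    rwa [SCe_apply_self, norm_one] at h

lemma SC_sum_le (f : SCEb →L[ℝ] ℝ) (F : Finset ℕ) :
    ∑ j ∈ F, |f (SCe j)| ≤ ‖f‖ := by
  set z : SCEb := ∑ j ∈ F, Real.sign (f (SCe j)) • SCe j with hz
  have hfz : f z = ∑ j ∈ F, |f (SCe j)| := by
    rw [hz, map_sum]
    refine Finset.sum_congr rfl fun j _ => ?_
    rw [map_smul, smul_eq_mul, SC_sign_mul]
  have hznorm : ‖z‖ ≤ 1 := by
    refine lp.norm_le_of_forall_le zero_le_one fun i => ?_
    have hzi : (z : ∀ _ : ℕ, ℝ) i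
        = ∑ j ∈ F, Real.sign (f (SCe j)) * (SCe j : ∀ _ : ℕ, ℝ) i := by
      rw [hz]
      simp [lp.coeFn_sum, lp.coeFn_smul]
      exact Finset.sum_apply (M := fun _ : ℕ => ℝ) i F _
    rw [hzi]
    by_cases hi : i ∈ F
    · rw [Finset.sum_eq_single i
        (fun j _ hji => by rw [SCe_apply_ne (Ne.symm hji), mul_zero])
        (fun h => absurd hi h)]
      rw [SCe_apply_self, mul_one, Real.norm_eq_abs]
      exact SC_abs_sign_le _
    · have h0 : ∑ j ∈ F, Real.sign (f (SCe j)) * (SCe j : ∀ _ : ℕ, ℝ) i = 0 :=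
        Finset.sum_eq_zero fun j hj => by
          rw [SCe_apply_ne (show i ≠ j from fun h => hi (by rw [h]; exact hj)), mul_zero]
      rw [h0]; simp
  calc ∑ j ∈ F, |f (SCe j)| = f z := hfz.symm
    _ ≤ |f z| := le_abs_self _
    _ ≤ ‖f‖ * ‖z‖ := f.le_opNorm z
    _ ≤ ‖f‖ * 1 := mul_le_mul_of_nonneg_left hznorm (norm_nonneg f)
    _ = ‖f‖ := mul_one _

lemma SC_memLpw_e {p : ℝ} (hp : 1 ≤ p) : MemLpw p SCe := by
  intro f
  have hs : Summable fun j => |f (SCe j)| :=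
    summable_of_sum_le (fun j => abs_nonneg _) (fun F => SC_sum_le f F)
  have h0 : Tendsto (fun j => |f (SCe j)|) atTop (𝓝 0) := hs.tendsto_atTop_zero
  have hev : ∀ᶠ j in atTop, ‖|f (SCe j)| ^ p‖ ≤ |f (SCe j)| := by
    filter_upwards [h0.eventually (eventually_le_nhds one_pos)] with j hj
    have h1 : (0:ℝ) ≤ |f (SCe j)| ^ p := Real.rpow_nonneg (abs_nonneg _) _
    rw [Real.norm_eq_abs, abs_of_nonneg h1]
    rcases eq_or_lt_of_le (abs_nonneg (f (SCe j))) with h | h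
    · rw [← h, Real.zero_rpow (by linarith : p ≠ 0)]
    · calc |f (SCe j)| ^ p ≤ |f (SCe j)| ^ (1:ℝ) :=
        Real.rpow_le_rpow_of_exponent_ge h hj hp
      _ = |f (SCe j)| := Real.rpow_one _
  exact Summable.of_norm_bounded_eventually_nat hs hev


/-- Weakly q-summable sequences are norm bounded (Banach–Steinhaus). -/
lemma SC_bdd {E : Type*} [NormedAddCommGroup E] [NormedSpace ℝ E]
    {q : ℝ} (hq : 0 < q) {y : ℕ → E} (hy : MemLpw q y) :
    ∃ C, 0 ≤ C ∧ ∀ j, ‖y j‖ ≤ C := by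
  obtain ⟨C, hC⟩ := banach_steinhaus
    (g := fun j => NormedSpace.inclusionInDoubleDual ℝ E (y j)) (fun f => by
      have h0 : Tendsto (fun j => |f (y j)| ^ q) atTop (𝓝 0) := (hy f).tendsto_atTop_zero
      obtain ⟨D, hD⟩ := h0.bddAbove_range
      refine ⟨(max D 0) ^ (1 / q), fun j => ?_⟩
      have h1 : |f (y j)| ^ q ≤ max D 0 :=
        le_trans (hD ⟨j, rfl⟩) (le_max_left _ _)
      have h2 : |f (y j)| = (|f (y j)| ^ q) ^ (1 / q) := by
        rw [← Real.rpow_mul (abs_nonneg _), mul_one_div, div_self hq.ne', Real.rpow_one]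
      calc ‖NormedSpace.inclusionInDoubleDual ℝ E (y j) f‖ = |f (y j)| := rfl
        _ = (|f (y j)| ^ q) ^ (1 / q) := h2
        _ ≤ (max D 0) ^ (1 / q) := by
            apply Real.rpow_le_rpow (Real.rpow_nonneg (abs_nonneg _) _) h1
            positivity)
  refine ⟨max C 0, le_max_right _ _, fun j => ?_⟩
  refine NormedSpace.norm_le_dual_bound ℝ (y j) (le_max_right _ _) (fun f => ?_)
  calc ‖f (y j)‖ = ‖NormedSpace.inclusionInDoubleDual ℝ E (y j) f‖ := rfl
    _ ≤ ‖NormedSpace.inclusionInDoubleDual ℝ E (y j)‖ * ‖f‖ :=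
        ContinuousLinearMap.le_opNorm _ _
    _ ≤ max C 0 * ‖f‖ := by
        gcongr; exact le_trans (hC j) (le_max_left _ _)

noncomputable def SCy (p : ℝ) (j : ℕ) : SCEb := (((j : ℝ) + 1) ^ (-(1/p))) • SCe 0

lemma SC_memLpw_y {p q : ℝ} (hp : 1 ≤ p) (hpq : p < q) : MemLpw q (SCy p) := by
  intro f
  have hp0 : (0:ℝ) < p := by linarith
  have key : ∀ j : ℕ, |f (SCy p j)| ^ q
      = ((j : ℝ) + 1) ^ (-(q/p)) * |f (SCe 0)| ^ q := by
    intro j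
    have hb : (0:ℝ) ≤ ((j : ℝ) + 1) ^ (-(1/p)) := Real.rpow_nonneg (by positivity) _
    rw [SCy, map_smul, smul_eq_mul, abs_mul, abs_of_nonneg hb,
      Real.mul_rpow hb (abs_nonneg _), ← Real.rpow_mul (by positivity),
      show -(1/p) * q = -(q/p) by ring]
  have hs : Summable fun n : ℕ => ((n : ℝ)) ^ (-(q/p)) := by
    refine Real.summable_nat_rpow.2 ?_
    have h1 : 1 < q / p := (one_lt_div hp0).2 hpq
    linarith
  have hs2 : Summable fun n : ℕ => ((n : ℝ) + 1) ^ (-(q/p)) := by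
    have := (summable_nat_add_iff 1).2 hs
    refine this.congr fun n => ?_
    push_cast
    ring_nf
  exact (funext key : _) ▸ hs2.mul_right _

lemma SC_not_summable {p : ℝ} (hp : 1 ≤ p) :
    ¬ Summable fun j : ℕ => (((j : ℝ) + 1) ^ (-(1/p))) ^ p := by
  have hp0 : p ≠ 0 := by positivity
  have key : ∀ j : ℕ, (((j : ℝ) + 1) ^ (-(1/p))) ^ p = ((j : ℝ) + 1)⁻¹ := by
    intro j
    rw [← Real.rpow_mul (by positivity), show -(1/p) * p = -1 by
      rw [neg_mul, one_div, inv_mul_cancel₀ hp0], Real.rpow_neg_one]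
  rw [funext key]
  intro h
  apply Real.not_summable_natCast_inv
  rw [← summable_nat_add_iff 1]
  exact h.congr fun n => by push_cast; ring_nf

noncomputable def SCA : SCEb →L[ℝ] SCEb →L[ℝ] SCEb :=
  (ContinuousLinearMap.lsmul ℝ ℝ).comp SCphi

@[simp] lemma SCA_apply (x y : SCEb) : SCA x y = SCphi x • y := rfl

lemma SC_summing {p q : ℝ} (hp : 1 ≤ p) (hpq : p < q) (x y : ℕ → SCEb)
    (hx : MemLpw p x) (hy : MemLpw q y) :
    Summable fun j => ‖SCA (x j) (y j)‖ ^ p := by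
  obtain ⟨C, hC0, hC⟩ := SC_bdd (by linarith : (0:ℝ) < q) hy
  refine Summable.of_nonneg_of_le (fun j => Real.rpow_nonneg (norm_nonneg _) _)
    (fun j => ?_) ((hx SCphi).mul_right (C ^ p))
  calc ‖SCA (x j) (y j)‖ ^ p = (|SCphi (x j)| * ‖y j‖) ^ p := by
        rw [SCA_apply, norm_smul, Real.norm_eq_abs]
    _ ≤ (|SCphi (x j)| * C) ^ p :=
        Real.rpow_le_rpow (by positivity)
          (mul_le_mul_of_nonneg_left (hC j) (abs_nonneg _)) (by linarith)
    _ = |SCphi (x j)| ^ p * C ^ p := Real.mul_rpow (abs_nonneg _) hC0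

lemma SC_transpose_norm {p : ℝ} (hp : 1 ≤ p) (j : ℕ) :
    ‖SCA (SCy p j) (SCe j)‖ = ((j : ℝ) + 1) ^ (-(1/p)) := by
  have hb : (0:ℝ) ≤ ((j : ℝ) + 1) ^ (-(1/p)) := Real.rpow_nonneg (by positivity) _
  have h1 : SCphi (SCy p j) = ((j : ℝ) + 1) ^ (-(1/p)) := by
    rw [SCy, map_smul, smul_eq_mul, SCphi_apply, SCe_apply_self, mul_one]
  rw [SCA_apply, h1, norm_smul, Real.norm_eq_abs, abs_of_nonneg hb, SCe_norm, mul_one]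

end SCaux

theorem stmt_8 (p q : ℝ) (hp : 1 ≤ p) (hpq : p < q) :
    Nonempty (SummingCounterexample p q) := by
  refine ⟨{ E := SCEb
            grp := inferInstance
            sp := inferInstance
            cs := inferInstance
            A := SCA
            summing := fun x y hx hy => SC_summing hp hpq x y hx hy
            not_transpose := ?_ }⟩
  intro h
  have hs := h SCe (SCy p) (SC_memLpw_e hp) (SC_memLpw_y hp hpq)
  exact SC_not_summable hp (hs.congr fun j => by rw [SC_transpose_norm hp j])
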